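/- If λ ∈ R^p satisfies Σ_{i∈I} λ_i ≤ Σ_{i=1}^{|I|} w_i for every subset I ⊆ {1,...,p}, where w_1 ≥ w_2 ≥ ... ≥ w_p ≥ 0 (this ordering is not needed; only the stated constraints), then for all y ∈ R^p with nonnegative components, Σ_{i=1}^p λ_i y_i ≤ OWA(y) = Σ_{i=1}^p w_i y_{(i)}. -/

import Mathlib

noncomputable def sortedDesc {p : ℕ} (y : Fin p → ℝ) : Fin p → ℝ :=
  fun i => y (Tuple.sort y (Fin.rev i))

/-- Ordered weighted average: `owa w y = ∑ i, w i * y_(i)` where `y_(i)` is the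
`i`-th largest component of `y`. -/
noncomputable def owa {p : ℕ} (w y : Fin p → ℝ) : ℝ :=
  ∑ i, w i * sortedDesc y i

lemma natkey (p : ℕ) (W M Z : ℕ → ℝ)
    (hZa : ∀ t, Z (t+1) ≤ Z t) (hZp : Z p = 0)
    (h : ∀ t < p, ∑ i ∈ Finset.range (t+1), M i ≤ ∑ i ∈ Finset.range (t+1), W i) :
    ∑ i ∈ Finset.range p, M i * Z i ≤ ∑ i ∈ Finset.range p, W i * Z i := by
  have hz : ∀ i < p, Z i = ∑ t ∈ Finset.Ico i p, (Z t - Z (t+1)) := by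
    intro i hi
    rw [Finset.sum_Ico_eq_sum_range]
    simp only [show ∀ k : ℕ, i + k + 1 = i + (k+1) from fun k => by omega]
    rw [Finset.sum_range_sub' (fun k => Z (i + k))]
    simp only [add_zero]
    rw [show i + (p - i) = p by omega, hZp, sub_zero]
  have key : ∀ F : ℕ → ℝ, ∑ i ∈ Finset.range p, F i * Z i
      = ∑ t ∈ Finset.range p, (∑ i ∈ Finset.range (t+1), F i) * (Z t - Z (t+1)) := by
    intro F
    calc ∑ i ∈ Finset.range p, F i * Z i
        = ∑ i ∈ Finset.range p, ∑ t ∈ Finset.Ico i p, F i * (Z t - Z (t+1)) := by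
          refine Finset.sum_congr rfl fun i hi => ?_
          rw [← Finset.mul_sum, ← hz i (Finset.mem_range.mp hi)]
      _ = ∑ t ∈ Finset.range p, ∑ i ∈ Finset.range (t+1), F i * (Z t - Z (t+1)) := by
          rw [show Finset.range p = Finset.Ico 0 p from (Finset.range_eq_Ico p).symm ▸ rfl]
          rw [Finset.sum_Ico_Ico_comm 0 p (fun i t => F i * (Z t - Z (t+1)))]
          refine Finset.sum_congr rfl fun t _ => by rw [Finset.range_eq_Ico]
      _ = ∑ t ∈ Finset.range p, (∑ i ∈ Finset.range (t+1), F i) * (Z t - Z (t+1)) := by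
          refine Finset.sum_congr rfl fun t _ => (Finset.sum_mul ..).symm
  rw [key M, key W]
  refine Finset.sum_le_sum fun t ht => ?_
  exact mul_le_mul_of_nonneg_right (h t (Finset.mem_range.mp ht))
    (sub_nonneg.mpr (hZa t))

theorem weighted_sum_le_owa {p : ℕ} (w l : Fin p → ℝ) (hw0 : ∀ i, 0 ≤ w i)
    (hl : ∀ I : Finset (Fin p),
      ∑ i ∈ I, l i ≤ ∑ j ∈ Finset.univ.filter (fun j : Fin p => (j : ℕ) < I.card), w j)
    (y : Fin p → ℝ) (hy : ∀ j, 0 ≤ y j) :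
    ∑ i, l i * y i ≤ owa w y := by
  set e : Equiv.Perm (Fin p) := Fin.revPerm.trans (Tuple.sort y) with he
  set m : Fin p → ℝ := fun i => l (e i) with hm
  set z : Fin p → ℝ := sortedDesc y with hzdef
  have hze : ∀ i, z i = y (e i) := fun i => rfl
  have hzanti : Antitone z := by
    intro i j hij
    exact Tuple.monotone_sort y (Fin.rev_le_rev.mpr hij)
  have hz0 : ∀ i, 0 ≤ z i := fun i => hy _
  set M : ℕ → ℝ := fun i => if h : i < p then m ⟨i, h⟩ else 0 with hM
  set W : ℕ → ℝ := fun i => if h : i < p then w ⟨i, h⟩ else 0 with hW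
  set Z : ℕ → ℝ := fun i => if h : i < p then z ⟨i, h⟩ else 0 with hZ
  have hZa : ∀ t, Z (t + 1) ≤ Z t := by
    intro t
    by_cases h1 : t + 1 < p
    · have h0 : t < p := by omega
      simp only [hZ, dif_pos h1, dif_pos h0]
      exact hzanti (by simp [Fin.le_def])
    · by_cases h0 : t < p
      · simp only [hZ, dif_neg h1, dif_pos h0]; exact hz0 _
      · simp only [hZ, dif_neg h1, dif_neg h0]; exact le_rfl
  have hZp : Z p = 0 := by simp [hZ]
  have hcard : ∀ t, t < p →
      (Finset.univ.filter (fun i : Fin p => (i : ℕ) < t + 1)).card = t + 1 := by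
    intro t ht
    have heq : Finset.univ.filter (fun i : Fin p => (i : ℕ) < t + 1) =
        Finset.map (Fin.castLEEmb (by omega : t + 1 ≤ p)) Finset.univ := by
      ext j
      simp only [Finset.mem_filter, Finset.mem_univ, true_and, Finset.mem_map,
        Fin.castLEEmb_apply]
      constructor
      · intro hj; exact ⟨⟨(j : ℕ), hj⟩, by ext; simp⟩
      · rintro ⟨i, rfl⟩; simpa using i.isLt
    rw [heq, Finset.card_map, Finset.card_univ, Fintype.card_fin]
  have hrange : ∀ (f : Fin p → ℝ) (k : ℕ), k ≤ p →
      (∑ i ∈ Finset.range k, if h : i < p then f ⟨i, h⟩ else 0)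
        = ∑ i ∈ Finset.univ.filter (fun i : Fin p => (i : ℕ) < k), f i := by
    intro f k hk
    calc (∑ i ∈ Finset.range k, if h : i < p then f ⟨i, h⟩ else 0)
        = ∑ i ∈ (Finset.range p).filter (· < k), if h : i < p then f ⟨i, h⟩ else 0 := by
          congr 1; ext a; simp; omega
      _ = ∑ i ∈ Finset.range p,
            if i < k then (if h : i < p then f ⟨i, h⟩ else 0) else 0 :=
          Finset.sum_filter _ _
      _ = ∑ i : Fin p, if (i : ℕ) < k then f i else 0 := by
          rw [← Fin.sum_univ_eq_sum_range
            (fun n => if n < k then (if h : n < p then f ⟨n, h⟩ else 0) else 0) p]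
          exact Finset.sum_congr rfl fun i _ => by
            by_cases h : (i : ℕ) < k <;> simp [h, i.isLt]
      _ = ∑ i ∈ Finset.univ.filter (fun i : Fin p => (i : ℕ) < k), f i :=
          (Finset.sum_filter _ _).symm
  have hpre : ∀ t < p, ∑ i ∈ Finset.range (t + 1), M i ≤ ∑ i ∈ Finset.range (t + 1), W i := by
    intro t ht
    have h1 : ∑ i ∈ Finset.range (t + 1), M i =
        ∑ i ∈ Finset.univ.filter (fun i : Fin p => (i : ℕ) < t + 1), m i := by
      simp only [hM]; exact hrange m (t + 1) (by omega)
    have h2 : ∑ i ∈ Finset.range (t + 1), W i =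
        ∑ i ∈ Finset.univ.filter (fun i : Fin p => (i : ℕ) < t + 1), w i := by
      simp only [hW]; exact hrange w (t + 1) (by omega)
    rw [h1, h2]
    set I := Finset.univ.filter (fun i : Fin p => (i : ℕ) < t + 1) with hI
    have h3 : ∑ i ∈ I, m i = ∑ j ∈ I.image e, l j := by
      rw [Finset.sum_image (fun a _ b _ hab => e.injective hab)]
    have h4 : (I.image e).card = t + 1 := by
      rw [Finset.card_image_of_injective _ e.injective, hI, hcard t ht]
    calc ∑ i ∈ I, m i = ∑ j ∈ I.image e, l j := h3
      _ ≤ ∑ j ∈ Finset.univ.filter (fun j : Fin p => (j : ℕ) < (I.image e).card), w j :=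
          hl (I.image e)
      _ = ∑ i ∈ I, w i := by rw [h4, hI]
  have lhs_eq : ∑ i, l i * y i = ∑ i ∈ Finset.range p, M i * Z i := by
    have h1 : ∑ i, l i * y i = ∑ i, m i * z i := by
      rw [← Equiv.sum_comp e (fun i => l i * y i)]
      exact Finset.sum_congr rfl fun i _ => by rw [hze]
    rw [h1, ← Fin.sum_univ_eq_sum_range (fun i => M i * Z i) p]
    exact Finset.sum_congr rfl fun i _ => by simp [hM, hZ, i.isLt]
  have rhs_eq : owa w y = ∑ i ∈ Finset.range p, W i * Z i := by
    rw [owa, ← Fin.sum_univ_eq_sum_range (fun i => W i * Z i) p]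
    exact Finset.sum_congr rfl fun i _ => by simp [hW, hZ, i.isLt, hzdef]
  rw [lhs_eq, rhs_eq]
  exact natkey p W M Z hZa hZp hpre
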